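/- Let X be a Tychonoff space. For every open set U ⊆ βX, the set {μ ∈ R_min(X) : S(μ) ∩ U ≠ ∅} is open in R_min(X) with the topology of pointwise convergence; that is, the set-valued support map μ ↦ S(μ) on R_min(X) is lower semicontinuous. -/
import Mathlib


open Set

/-- The Čech–Stone extension `βf : βX → ℝ` of a bounded continuous function `f : X → ℝ`
(obtained by extending `f`, viewed as a map into the compact interval `[-‖f‖, ‖f‖]`,
over the Stone–Čech compactification). -/
noncomputable def betaExt {X : Type*} [TopologicalSpace X] (f : BoundedContinuousFunction X ℝ) :
    StoneCech X → ℝ :=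
  Subtype.val ∘ stoneCechExtend
    (Continuous.subtype_mk f.continuous
      (fun x => Set.mem_Icc.mpr (abs_le.mp (Real.norm_eq_abs (f x) ▸ f.norm_coe_le_norm x)))
      : Continuous fun x => (⟨f x, _⟩ : Set.Icc (-‖f‖) ‖f‖))

variable {X : Type*} [TopologicalSpace X]

/-- `μ` is *normed*: `μ 1 = 1`. -/
def BNormed (μ : BoundedContinuousFunction X ℝ → ℝ) : Prop := μ 1 = 1

/-- `μ` is *weakly additive*: `μ (f + c·1) = μ f + c`. -/
def BWeaklyAdditive (μ : BoundedContinuousFunction X ℝ → ℝ) : Prop :=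
  ∀ (f : BoundedContinuousFunction X ℝ) (c : ℝ),
    μ (f + BoundedContinuousFunction.const X c) = μ f + c

/-- `μ` *preserves min*. -/
def BPreservesMin (μ : BoundedContinuousFunction X ℝ → ℝ) : Prop :=
  ∀ f g : BoundedContinuousFunction X ℝ, μ (f ⊓ g) = min (μ f) (μ g)

/-- `μ` *preserves max*. -/
def BPreservesMax (μ : BoundedContinuousFunction X ℝ → ℝ) : Prop :=
  ∀ f g : BoundedContinuousFunction X ℝ, μ (f ⊔ g) = max (μ f) (μ g)

/-- `μ` *weakly preserves min*: `μ (min{f, c·1}) = min{μ f, c}`. -/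
def BWeaklyPreservesMin (μ : BoundedContinuousFunction X ℝ → ℝ) : Prop :=
  ∀ (f : BoundedContinuousFunction X ℝ) (c : ℝ),
    μ (f ⊓ BoundedContinuousFunction.const X c) = min (μ f) c

/-- `μ` *weakly preserves max*: `μ (max{f, c·1}) = max{μ f, c}`. -/
def BWeaklyPreservesMax (μ : BoundedContinuousFunction X ℝ → ℝ) : Prop :=
  ∀ (f : BoundedContinuousFunction X ℝ) (c : ℝ),
    μ (f ⊔ BoundedContinuousFunction.const X c) = max (μ f) c

/-- The support `S(μ) ⊆ βX` of a functional `μ` on `C*(X)`: points `p ∈ βX` such that every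
open neighbourhood `O` of `p` admits `f, g ∈ C*(X)` with `βf = βg` off `O` and `μ f ≠ μ g`. -/
def betaSupport (μ : BoundedContinuousFunction X ℝ → ℝ) : Set (StoneCech X) :=
  {p | ∀ O : Set (StoneCech X), IsOpen O → p ∈ O →
    ∃ f g : BoundedContinuousFunction X ℝ,
      (∀ q ∉ O, betaExt f q = betaExt g q) ∧ μ f ≠ μ g}

/-- `R_min(X)`: normed, weakly additive functionals preserving min and weakly preserving max. -/
def RMin (X : Type*) [TopologicalSpace X] : Set (BoundedContinuousFunction X ℝ → ℝ) :=
  {μ | BNormed μ ∧ BWeaklyAdditive μ ∧ BPreservesMin μ ∧ BWeaklyPreservesMax μ}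

/-- `R_max(X)`: normed, weakly additive functionals preserving max and weakly preserving min. -/
def RMax (X : Type*) [TopologicalSpace X] : Set (BoundedContinuousFunction X ℝ → ℝ) :=
  {μ | BNormed μ ∧ BWeaklyAdditive μ ∧ BPreservesMax μ ∧ BWeaklyPreservesMin μ}

/-- `R_min(X)_c`: members of `R_min(X)` with compact support, i.e. `∅ ≠ S(μ) ⊆ η(X)`. -/
def RMinC (X : Type*) [TopologicalSpace X] : Set (BoundedContinuousFunction X ℝ → ℝ) :=
  {μ | μ ∈ RMin X ∧ (betaSupport μ).Nonempty ∧
    betaSupport μ ⊆ Set.range (stoneCechUnit : X → StoneCech X)}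

/-- `R_max(X)_c`: members of `R_max(X)` with compact support, i.e. `∅ ≠ S(μ) ⊆ η(X)`. -/
def RMaxC (X : Type*) [TopologicalSpace X] : Set (BoundedContinuousFunction X ℝ → ℝ) :=
  {μ | μ ∈ RMax X ∧ (betaSupport μ).Nonempty ∧
    betaSupport μ ⊆ Set.range (stoneCechUnit : X → StoneCech X)}

section Aux

variable {X : Type*} [TopologicalSpace X]

lemma betaExt_continuous (f : BoundedContinuousFunction X ℝ) : Continuous (betaExt f) :=
  continuous_subtype_val.comp (continuous_stoneCechExtend _)

lemma betaExt_unit (f : BoundedContinuousFunction X ℝ) (x : X) :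
    betaExt f (stoneCechUnit x) = f x :=
  congrArg Subtype.val (congrFun (stoneCechExtend_extends _) x)

lemma betaExt_eq {f : BoundedContinuousFunction X ℝ} {H : StoneCech X → ℝ}
    (hH : Continuous H) (h : ∀ x, H (stoneCechUnit x) = f x) : betaExt f = H :=
  stoneCech_hom_ext (betaExt_continuous f) hH
    (funext fun x => by rw [Function.comp_apply, Function.comp_apply, betaExt_unit, h x])

lemma rmin_mono {μ : BoundedContinuousFunction X ℝ → ℝ} (hmin : BPreservesMin μ)
    {f g : BoundedContinuousFunction X ℝ} (h : f ≤ g) : μ f ≤ μ g := by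
  have h1 : f ⊓ g = f := inf_eq_left.mpr h
  have h2 := hmin f g
  rw [h1] at h2
  rw [h2]
  exact min_le_right _ _

lemma rmin_approx {μ : BoundedContinuousFunction X ℝ → ℝ}
    (hadd : BWeaklyAdditive μ) (hmin : BPreservesMin μ)
    {f g : BoundedContinuousFunction X ℝ} {ε : ℝ}
    (h : ∀ x, |f x - g x| ≤ ε) : |μ f - μ g| ≤ ε := by
  have h1 : f ≤ g + BoundedContinuousFunction.const X ε := by
    intro x
    have := (abs_le.mp (h x)).2
    simpa [BoundedContinuousFunction.coe_add] using by linarith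
  have h2 : g ≤ f + BoundedContinuousFunction.const X ε := by
    intro x
    have := (abs_le.mp (h x)).1
    simpa [BoundedContinuousFunction.coe_add] using by linarith
  have m1 := rmin_mono hmin h1
  have m2 := rmin_mono hmin h2
  rw [hadd g ε] at m1
  rw [hadd f ε] at m2
  rw [abs_le]
  constructor <;> linarith

/-- The key "hard" direction: if `βf = βg` off an open set `U` but `μ f ≠ μ g`, then the
support of `μ` meets `U`. -/
lemma betaSupport_meets {μ : BoundedContinuousFunction X ℝ → ℝ} (hμ : μ ∈ RMin X)
    {U : Set (StoneCech X)} {f g : BoundedContinuousFunction X ℝ}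
    (hfg : ∀ q ∉ U, betaExt f q = betaExt g q) (hne : μ f ≠ μ g) :
    (betaSupport μ ∩ U).Nonempty := by
  classical
  obtain ⟨-, hadd, hmin, -⟩ := hμ
  by_contra hempty
  rw [Set.not_nonempty_iff_eq_empty] at hempty
  -- choose "null" neighborhoods
  have hnull : ∀ p : StoneCech X, ∃ O : Set (StoneCech X), IsOpen O ∧ (p ∈ U → p ∈ O) ∧
      ∀ f' g' : BoundedContinuousFunction X ℝ,
        (∀ q ∉ O, betaExt f' q = betaExt g' q) → μ f' = μ g' := by
    intro p
    by_cases hp : p ∈ U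
    · have hps : p ∉ betaSupport μ := fun h =>
        (Set.eq_empty_iff_forall_notMem.mp hempty p) ⟨h, hp⟩
      simp only [betaSupport, Set.mem_setOf_eq, not_forall] at hps
      obtain ⟨O, hO, hpO, hOn⟩ := hps
      push_neg at hOn
      exact ⟨O, hO, fun _ => hpO, hOn⟩
    · refine ⟨∅, isOpen_empty, fun h => absurd h hp, fun f' g' h => ?_⟩
      have : f' = g' := by
        ext x
        rw [← betaExt_unit f', ← betaExt_unit g', h _ (Set.notMem_empty _)]
      rw [this]
  choose O hOopen hOmem hOnull using hnull
  refine hne ?_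
  have key : ∀ ε : ℝ, 0 < ε → |μ g - μ f| ≤ ε := by
    intro ε hε
    set F := betaExt f with hF
    set G := betaExt g with hG
    set K : Set (StoneCech X) := {q | ε ≤ |F q - G q|} with hK
    have hKclosed : IsClosed K :=
      isClosed_le continuous_const ((betaExt_continuous f).sub (betaExt_continuous g)).abs
    have hKU : K ⊆ U := by
      intro q hq
      by_contra hqU
      have h0 : F q = G q := hfg q hqU
      have : ε ≤ |F q - G q| := hq
      rw [h0, sub_self, abs_zero] at this
      linarith
    have hKcov : K ⊆ ⋃ p, O p := fun q hq => Set.mem_iUnion.mpr ⟨q, hOmem q (hKU hq)⟩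
    obtain ⟨t, ht⟩ := (hKclosed.isCompact).elim_finite_subcover O hOopen hKcov
    set n := t.card with hn
    set e := t.equivFin with he
    set Oi : Fin n → Set (StoneCech X) := fun i => O ((e.symm i : t) : StoneCech X) with hOi
    have hOiopen : ∀ i, IsOpen (Oi i) := fun i => hOopen _
    have hKcov' : K ⊆ ⋃ i, Oi i := by
      intro q hq
      obtain ⟨p, hp1, hp2⟩ := Set.mem_iUnion₂.mp (ht hq)
      refine Set.mem_iUnion.mpr ⟨e ⟨p, hp1⟩, ?_⟩
      simpa [hOi, Equiv.symm_apply_apply] using hp2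
    obtain ⟨ρ, hρ⟩ := PartitionOfUnity.exists_isSubordinate hKclosed Oi hOiopen hKcov'
    -- partial sums
    set ψ : ℕ → StoneCech X → ℝ :=
      fun k q => ∑ i ∈ Finset.univ.filter (fun i : Fin n => (i : ℕ) < k), ρ i q with hψ
    have hψcont : ∀ k, Continuous (ψ k) := fun k =>
      continuous_finset_sum _ fun i _ => (ρ i).continuous
    have hψ_nonneg : ∀ k q, 0 ≤ ψ k q := fun k q =>
      Finset.sum_nonneg fun i _ => ρ.nonneg i q
    have hψ_full : ∀ q, ψ n q = ∑ᶠ i, ρ i q := by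
      intro q
      rw [finsum_eq_sum_of_fintype]
      apply Finset.sum_congr _ (fun _ _ => rfl)
      ext i
      simp [i.isLt]
    have hψ_le_one : ∀ k q, ψ k q ≤ 1 := by
      intro k q
      calc ψ k q ≤ ψ n q := by
            apply Finset.sum_le_sum_of_subset_of_nonneg
            · intro i hi
              simp [i.isLt]
            · intro i _ _; exact ρ.nonneg i q
        _ = ∑ᶠ i, ρ i q := hψ_full q
        _ ≤ 1 := ρ.sum_le_one q
    set H : ℕ → StoneCech X → ℝ := fun k q => G q + ψ k q * (F q - G q) with hHdef
    have hHcont : ∀ k, Continuous (H k) :=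
      fun k => ((betaExt_continuous g).add ((hψcont k).mul
        ((betaExt_continuous f).sub (betaExt_continuous g))))
    set h : ℕ → BoundedContinuousFunction X ℝ := fun k =>
      (BoundedContinuousFunction.mkOfCompact ⟨H k, hHcont k⟩).compContinuous
        ⟨stoneCechUnit, continuous_stoneCechUnit⟩ with hhdef
    have hhapp : ∀ k x, h k x = H k (stoneCechUnit x) := fun k x => rfl
    have hbeta : ∀ k, betaExt (h k) = H k := fun k =>
      betaExt_eq (hHcont k) (fun x => (hhapp k x).symm)
    have hchain : ∀ k, k ≤ n → μ (h k) = μ g := by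
      intro k hk
      induction k with
      | zero =>
        have : h 0 = g := by
          ext x
          rw [hhapp]
          simp only [hHdef, hψ]
          norm_num
          exact betaExt_unit g x
        rw [this]
      | succ k ih =>
        have hkn : k < n := hk
        have hstep : μ (h (k + 1)) = μ (h k) := by
          apply hOnull ((e.symm (⟨k, hkn⟩ : Fin n) : t) : StoneCech X)
          intro q hq
          rw [hbeta, hbeta]
          have hzero : ρ (⟨k, hkn⟩ : Fin n) q = 0 :=
            image_eq_zero_of_notMem_tsupport (fun hmem => hq (hρ _ hmem))
          have hsplit : Finset.univ.filter (fun i : Fin n => (i : ℕ) < k + 1) =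
              insert (⟨k, hkn⟩ : Fin n)
                (Finset.univ.filter (fun i : Fin n => (i : ℕ) < k)) := by
            ext i
            simp only [Finset.mem_filter, Finset.mem_univ, true_and, Finset.mem_insert,
              Nat.lt_succ_iff_lt_or_eq, Fin.ext_iff]
            tauto
          have hpsi : ψ (k + 1) q = ψ k q := by
            rw [hψ]
            simp only []
            rw [hsplit, Finset.sum_insert (by simp), hzero, zero_add]
          simp only [hHdef, hpsi]
        rw [hstep, ih (le_of_lt hkn)]
    have happrox : ∀ x, |h n x - f x| ≤ ε := by
      intro x
      rw [hhapp]
      set q := stoneCechUnit x with hq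
      have hFq : F q = f x := betaExt_unit f x
      by_cases hqK : q ∈ K
      · have h1 : ψ n q = 1 := by rw [hψ_full]; exact ρ.sum_eq_one hqK
        simp only [hHdef, h1, one_mul]
        rw [hFq]
        simp [abs_of_nonneg, le_of_lt hε]
      · have h2 : |F q - G q| ≤ ε := le_of_lt (lt_of_not_ge hqK)
        have h3 : |H n q - F q| ≤ ε := by
          have hexp : H n q - F q = (ψ n q - 1) * (F q - G q) := by
            simp only [hHdef]; ring
          rw [hexp, abs_mul]
          have h4 : |ψ n q - 1| ≤ 1 := by
            have a := hψ_le_one n q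
            have b := hψ_nonneg n q
            rw [abs_le]
            constructor <;> linarith
          calc |ψ n q - 1| * |F q - G q| ≤ 1 * |F q - G q| :=
                mul_le_mul_of_nonneg_right h4 (abs_nonneg _)
            _ = |F q - G q| := one_mul _
            _ ≤ ε := h2
        rwa [hFq] at h3
    have hfin : |μ (h n) - μ f| ≤ ε := rmin_approx hadd hmin happrox
    rw [hchain n le_rfl] at hfin
    exact hfin
  by_contra hne'
  have hd : 0 < |μ g - μ f| := abs_pos.mpr (sub_ne_zero.mpr (Ne.symm hne'))
  have := key (|μ g - μ f| / 2) (by linarith)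
  linarith

end Aux

/-- the support map on `R_min(X)` is lower semicontinuous: for each open
`U ⊆ βX`, the set `{μ ∈ R_min(X) : S(μ) ∩ U ≠ ∅}` is open in `R_min(X)` (with the subspace
topology inherited from the product topology of pointwise convergence). -/
theorem statement11 (X : Type*) [TopologicalSpace X] [T35Space X] :
    ∀ U : Set (StoneCech X), IsOpen U →
      IsOpen {ν : RMin X | ((betaSupport (ν : BoundedContinuousFunction X ℝ → ℝ)) ∩ U).Nonempty} := by
  intro U hU
  have hset : {ν : RMin X | ((betaSupport (ν : BoundedContinuousFunction X ℝ → ℝ)) ∩ U).Nonempty} =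
      Subtype.val ⁻¹' (⋃ (f : BoundedContinuousFunction X ℝ) (g : BoundedContinuousFunction X ℝ)
        (_ : ∀ q ∉ U, betaExt f q = betaExt g q),
          {μ : BoundedContinuousFunction X ℝ → ℝ | μ f ≠ μ g}) := by
    ext ν
    simp only [Set.mem_setOf_eq, Set.mem_preimage, Set.mem_iUnion]
    constructor
    · rintro ⟨p, hpS, hpU⟩
      obtain ⟨f, g, hfg, hne⟩ := hpS U hU hpU
      exact ⟨f, g, hfg, hne⟩
    · rintro ⟨f, g, hfg, hne⟩
      exact betaSupport_meets ν.2 hfg hne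
  rw [hset]
  apply IsOpen.preimage continuous_subtype_val
  apply isOpen_iUnion; intro f
  apply isOpen_iUnion; intro g
  apply isOpen_iUnion; intro _
  exact isOpen_ne_fun (continuous_apply f) (continuous_apply g)
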